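/- arXiv:2201.07699 — 3 statements merged into one kernel-verified Lean document; each statement's English description precedes it below -/
import Mathlib

section
/- Let H₁,…,Hₙ ∈ ℝ^{d×d} be symmetric with M₁I ⪯ Hᵢ ⪯ M₂I for 0 < M₁ ≤ M₂, let M̄ = (M₁+M₂)/2, γ = 1 − M₁/M₂, and let g₁,…,gₙ ∈ ℝ^d with ḡ = (1/n)∑ᵢ gᵢ, H̄ = (1/n)∑ᵢ Hᵢ. Then ‖(1/n)∑ᵢ Hᵢgᵢ − H̄ḡ‖² ≤ (M₂²γ²/(4n))·∑ᵢ ‖gᵢ − ḡ‖². -/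
open scoped RealInnerProductSpace
open Finset

section aux

variable {d : ℕ}

private lemma psd_inner_nonneg {M : Matrix (Fin d) (Fin d) ℝ} (hM : M.PosSemidef)
    (x : EuclideanSpace ℝ (Fin d)) :
    0 ≤ ⟪(Matrix.toEuclideanCLM (𝕜 := ℝ) M) x, x⟫ := by
  have h := hM.dotProduct_mulVec_nonneg (WithLp.equiv 2 _ x)
  rw [real_inner_comm, EuclideanSpace.inner_eq_star_dotProduct]
  simpa [Matrix.toLin'_apply, dotProduct_comm] using h

/-- Pointwise bound for an operator sandwiched between `0` and `2c`. -/
private lemma key_pointwise (c : ℝ) (hc : 0 ≤ c)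
    (B C : EuclideanSpace ℝ (Fin d) →L[ℝ] EuclideanSpace ℝ (Fin d))
    (hB0 : ∀ x, 0 ≤ ⟪B x, x⟫) (hC0 : ∀ x, 0 ≤ ⟪C x, x⟫)
    (hBC : ∀ x, B x + C x = (2 * c) • x)
    (hBsym : ∀ u v, ⟪B u, v⟫ = ⟪u, B v⟫)
    (x : EuclideanSpace ℝ (Fin d)) :
    ‖c • x - B x‖ ≤ c * ‖x‖ := by
  -- ⟪B y, y⟫ ≤ 2c‖y‖²
  have hub : ∀ y, ⟪B y, y⟫ ≤ 2 * c * ‖y‖ ^ 2 := by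
    intro y
    have h1 := hC0 y
    have h2 : ⟪B y, y⟫ + ⟪C y, y⟫ = 2 * c * ‖y‖ ^ 2 := by
      rw [← inner_add_left, hBC, real_inner_smul_left, real_inner_self_eq_norm_sq]
    linarith
  -- Cauchy-Schwarz for the PSD bilinear form of B
  have hCS : ∀ u v, ⟪B u, v⟫ ^ 2 ≤ ⟪B u, u⟫ * ⟪B v, v⟫ := by
    intro u v
    have hdisc := discrim_le_zero (a := ⟪B v, v⟫) (b := 2 * ⟪B u, v⟫) (c := ⟪B u, u⟫) ?_
    · rw [discrim] at hdisc
      nlinarith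
    · intro t
      have := hB0 (u + t • v)
      have hexp : ⟪B (u + t • v), u + t • v⟫
          = ⟪B v, v⟫ * t * t + 2 * ⟪B u, v⟫ * t + ⟪B u, u⟫ := by
        rw [map_add, map_smul]
        rw [inner_add_left, inner_add_right, inner_add_right]
        rw [inner_smul_left, inner_smul_right, inner_smul_left, inner_smul_right]
        simp only [RCLike.star_def, starRingEnd_apply, star_trivial]
        have hsymuv : ⟪B v, u⟫ = ⟪B u, v⟫ := by
          rw [hBsym v u, real_inner_comm]
        rw [hsymuv]; ring
      linarith [hexp ▸ this]
  -- ‖Bx‖² ≤ 2c⟪Bx, x⟫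
  have hkey : ‖B x‖ ^ 2 ≤ 2 * c * ⟪B x, x⟫ := by
    have h1 := hCS x (B x)
    have h2 := hub (B x)
    have h3 : ⟪B x, B x⟫ = ‖B x‖ ^ 2 := real_inner_self_eq_norm_sq _
    rw [h3] at h1
    rcases eq_or_lt_of_le (norm_nonneg (B x)) with h0 | h0
    · have hz : ‖B x‖ ^ 2 = 0 := by rw [← h0]; ring
      rw [hz]
      have := hB0 x
      positivity
    · have hr : 0 < ‖B x‖ ^ 2 := by positivity
      nlinarith [hB0 x, mul_le_mul_of_nonneg_left h2 (hB0 x)]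
  -- conclude
  have hsq : ‖c • x - B x‖ ^ 2 ≤ (c * ‖x‖) ^ 2 := by
    have hexp : ‖c • x - B x‖ ^ 2
        = c ^ 2 * ‖x‖ ^ 2 - 2 * c * ⟪B x, x⟫ + ‖B x‖ ^ 2 := by
      rw [norm_sub_sq_real, norm_smul, real_inner_smul_left]
      rw [real_inner_comm x (B x)]
      simp [Real.norm_eq_abs, abs_of_nonneg hc]
      ring
    rw [hexp]
    nlinarith
  rw [← Real.sqrt_sq (norm_nonneg (c • x - B x)), ← Real.sqrt_sq (mul_nonneg hc (norm_nonneg x))]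
  exact Real.sqrt_le_sqrt hsq

end aux

theorem hessian_avg_direction_error (d n : ℕ) (hn : 0 < n)
    (M₁ M₂ : ℝ) (hM₁ : 0 < M₁) (hM : M₁ ≤ M₂)
    (H : Fin n → Matrix (Fin d) (Fin d) ℝ)
    (hsym : ∀ i, (H i).IsSymm)
    (hlb : ∀ i, (H i - M₁ • (1 : Matrix (Fin d) (Fin d) ℝ)).PosSemidef)
    (hub : ∀ i, (M₂ • (1 : Matrix (Fin d) (Fin d) ℝ) - H i).PosSemidef)
    (g : Fin n → EuclideanSpace ℝ (Fin d))
    (gbar : EuclideanSpace ℝ (Fin d)) (hgbar : gbar = (1 / (n : ℝ)) • ∑ i, g i)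
    (Hbar : Matrix (Fin d) (Fin d) ℝ) (hHbar : Hbar = (1 / (n : ℝ)) • ∑ i, H i)
    (γ : ℝ) (hγ : γ = 1 - M₁ / M₂) :
    ‖(1 / (n : ℝ)) • (∑ i, Matrix.toEuclideanCLM (𝕜 := ℝ) (H i) (g i)) -
        Matrix.toEuclideanCLM (𝕜 := ℝ) Hbar gbar‖ ^ 2 ≤
      M₂ ^ 2 * γ ^ 2 / (4 * n) * ∑ i, ‖g i - gbar‖ ^ 2 := by
  have hn' : (0 : ℝ) < n := by exact_mod_cast hn
  have hM₂ : (0 : ℝ) < M₂ := lt_of_lt_of_le hM₁ hM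
  set c : ℝ := (M₂ - M₁) / 2 with hc_def
  have hc : 0 ≤ c := by simp [hc_def]; linarith
  set Mb : ℝ := (M₁ + M₂) / 2 with hMb_def
  set φ := Matrix.toEuclideanCLM (𝕜 := ℝ) (n := Fin d)
  -- pointwise bound for each i
  have hpoint : ∀ i x, ‖φ (H i) x - Mb • x‖ ≤ c * ‖x‖ := by
    intro i x
    have hHerm : ∀ j, star (M₂ • (1 : Matrix (Fin d) (Fin d) ℝ) - H j)
        = M₂ • (1 : Matrix (Fin d) (Fin d) ℝ) - H j := fun j => (hub j).1
    set B := φ (M₂ • (1 : Matrix (Fin d) (Fin d) ℝ) - H i) with hB_def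
    set C := φ (H i - M₁ • (1 : Matrix (Fin d) (Fin d) ℝ)) with hC_def
    have hB0 : ∀ y, 0 ≤ ⟪B y, y⟫ := fun y => psd_inner_nonneg (hub i) y
    have hC0 : ∀ y, 0 ≤ ⟪C y, y⟫ := fun y => psd_inner_nonneg (hlb i) y
    have hBC : ∀ y, B y + C y = (2 * c) • y := by
      intro y
      have : B + C = φ ((M₂ - M₁) • (1 : Matrix (Fin d) (Fin d) ℝ)) := by
        rw [hB_def, hC_def, ← map_add]
        congr 1
        rw [sub_smul]
        abel
      have h2 : (B + C) y = ((M₂ - M₁) • (φ 1)) y := by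
        rw [this, map_smul]
      have h3 : (2 : ℝ) * c = M₂ - M₁ := by rw [hc_def]; ring
      rw [h3]
      simpa [ContinuousLinearMap.smul_apply] using h2
    have hBsa : IsSelfAdjoint B := by
      rw [hB_def, isSelfAdjoint_iff, ← map_star, hHerm i]
    have hBsym : ∀ u v, ⟪B u, v⟫ = ⟪u, B v⟫ := by
      intro u v
      rw [← ContinuousLinearMap.adjoint_inner_left, hBsa.adjoint_eq]
    have hKey := key_pointwise c hc B C hB0 hC0 hBC hBsym x
    have hre : φ (H i) x - Mb • x = c • x - B x := by
      rw [hB_def, map_sub, map_smul]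
      simp only [ContinuousLinearMap.sub_apply, ContinuousLinearMap.smul_apply,
        map_one, ContinuousLinearMap.one_apply]
      rw [hc_def, hMb_def]
      module
    rw [hre]
    exact hKey
  -- algebraic identity
  have hsumg : ∑ i, g i = (n : ℝ) • gbar := by
    rw [hgbar, smul_smul]
    rw [mul_one_div, div_self (ne_of_gt hn'), one_smul]
  have hid : (1 / (n : ℝ)) • (∑ i, φ (H i) (g i)) - φ Hbar gbar
      = (1 / (n : ℝ)) • ∑ i, (φ (H i) (g i - gbar) - Mb • (g i - gbar)) := by
    have hphibar : φ Hbar gbar = (1 / (n : ℝ)) • ∑ i, φ (H i) gbar := by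
      rw [hHbar, map_smul, map_sum]
      simp [ContinuousLinearMap.smul_apply, ContinuousLinearMap.sum_apply]
    rw [hphibar]
    rw [← smul_sub, ← Finset.sum_sub_distrib]
    congr 1
    have : ∑ i, (φ (H i) (g i - gbar) - Mb • (g i - gbar))
        = ∑ i, (φ (H i) (g i) - φ (H i) gbar) - Mb • (∑ i, g i - (n : ℝ) • gbar) := by
      rw [Finset.sum_sub_distrib, smul_sub]
      rw [Finset.smul_sum]
      congr 1
      · exact Finset.sum_congr rfl fun i _ => by rw [map_sub]
      · have hzero : ∑ x : Fin n, (g x - gbar) = 0 := by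
          rw [Finset.sum_sub_distrib, hsumg, Finset.sum_const, Finset.card_univ,
            Fintype.card_fin, ← Nat.cast_smul_eq_nsmul ℝ, sub_self]
        calc ∑ x : Fin n, Mb • (g x - gbar)
            = Mb • ∑ x : Fin n, (g x - gbar) := (Finset.smul_sum).symm
          _ = 0 := by rw [hzero, smul_zero]
          _ = ∑ x : Fin n, Mb • g x - Mb • (n : ℝ) • gbar := by
              rw [← hsumg, ← Finset.smul_sum, sub_self]
    rw [this, hsumg, sub_self, smul_zero, sub_zero]
  rw [hid]
  -- norm bound
  set a : Fin n → ℝ := fun i => ‖g i - gbar‖ with ha_def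
  have hnorm : ‖(1 / (n : ℝ)) • ∑ i, (φ (H i) (g i - gbar) - Mb • (g i - gbar))‖
      ≤ (1 / (n : ℝ)) * ∑ i, c * a i := by
    rw [norm_smul]
    have h1 : ‖(1 / (n : ℝ))‖ = 1 / (n : ℝ) := by
      rw [Real.norm_eq_abs, abs_of_pos (by positivity)]
    rw [h1]
    refine mul_le_mul_of_nonneg_left ?_ (by positivity)
    calc ‖∑ i, (φ (H i) (g i - gbar) - Mb • (g i - gbar))‖
        ≤ ∑ i, ‖φ (H i) (g i - gbar) - Mb • (g i - gbar)‖ := norm_sum_le _ _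
      _ ≤ ∑ i, c * a i := Finset.sum_le_sum fun i _ => hpoint i (g i - gbar)
  have hcs : (∑ i, c * a i) ^ 2 ≤ (n : ℝ) * ∑ i, (c * a i) ^ 2 := by
    have := sq_sum_le_card_mul_sum_sq (s := Finset.univ) (f := fun i => c * a i)
    simpa using this
  have hLHS : ‖(1 / (n : ℝ)) • ∑ i, (φ (H i) (g i - gbar) - Mb • (g i - gbar))‖ ^ 2
      ≤ ((1 / (n : ℝ)) * ∑ i, c * a i) ^ 2 := by
    apply pow_le_pow_left₀ (norm_nonneg _) hnorm 2
  have hγc : M₂ ^ 2 * γ ^ 2 / 4 = c ^ 2 := by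
    have hM₂' : M₂ ≠ 0 := ne_of_gt hM₂
    rw [hγ, hc_def]
    field_simp
    ring_nf
  calc ‖(1 / (n : ℝ)) • ∑ i, (φ (H i) (g i - gbar) - Mb • (g i - gbar))‖ ^ 2
      ≤ ((1 / (n : ℝ)) * ∑ i, c * a i) ^ 2 := hLHS
    _ = (1 / (n : ℝ)) ^ 2 * (∑ i, c * a i) ^ 2 := by ring
    _ ≤ (1 / (n : ℝ)) ^ 2 * ((n : ℝ) * ∑ i, (c * a i) ^ 2) := by
        gcongr
    _ = (c ^ 2 / (n : ℝ)) * ∑ i, a i ^ 2 := by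
        rw [Finset.mul_sum, Finset.mul_sum, Finset.mul_sum]
        refine Finset.sum_congr rfl fun i _ => ?_
        field_simp
    _ = M₂ ^ 2 * γ ^ 2 / (4 * n) * ∑ i, a i ^ 2 := by
        rw [← hγc]; ring_nf
end

section
/- Let x̄^{k+1} = x̄^k − α d̄^k, let F be L-smooth, and let H̄ be symmetric with M₁I ⪯ H̄ ⪯ M₂I. Then F(x̄^{k+1}) ≤ F(x̄^k) − α M₁‖∇F(x̄^k)‖² + α⟨∇F(x̄^k), H̄∇F(x̄^k) − d̄^k⟩ + α²L(‖H̄∇F(x̄^k)‖² + ‖H̄∇F(x̄^k) − d̄^k‖²). -/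
open scoped RealInnerProductSpace

lemma quad_lower_bound (d : ℕ) (M₁ : ℝ) (Hbar : Matrix (Fin d) (Fin d) ℝ)
    (hlb : (Hbar - M₁ • (1 : Matrix (Fin d) (Fin d) ℝ)).PosSemidef)
    (x : EuclideanSpace ℝ (Fin d)) :
    M₁ * ‖x‖ ^ 2 ≤ ⟪x, Matrix.toEuclideanCLM (𝕜 := ℝ) Hbar x⟫ := by
  set v : Fin d → ℝ := WithLp.equiv 2 (Fin d → ℝ) x with hv
  have h := hlb.dotProduct_mulVec_nonneg v
  simp [Matrix.sub_mulVec, Matrix.smul_mulVec, dotProduct_sub,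
    dotProduct_smul] at h
  have happ : ∀ i, (Matrix.toEuclideanCLM (𝕜 := ℝ) Hbar x) i = Hbar.mulVec v i := by
    intro i
    have := congrFun (Matrix.ofLp_toEuclideanCLM Hbar x) i
    simpa [Matrix.mulVec, hv] using this
  have hinner : ⟪x, Matrix.toEuclideanCLM (𝕜 := ℝ) Hbar x⟫
      = dotProduct v (Hbar.mulVec v) := by
    simp [PiLp.inner_apply, dotProduct, RCLike.inner_apply, happ, hv, mul_comm]
  have hnorm : ‖x‖ ^ 2 = dotProduct v v := by
    rw [← real_inner_self_eq_norm_sq]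
    simp only [PiLp.inner_apply, dotProduct, hv, RCLike.inner_apply, conj_trivial]
    rfl
  rw [hinner, hnorm]
  linarith

theorem descent_step_bound (d : ℕ) (L α M₁ M₂ : ℝ) (hL : 0 < L) (hα : 0 < α)
    (hM₁ : 0 < M₁) (hM : M₁ ≤ M₂)
    (F : EuclideanSpace ℝ (Fin d) → ℝ)
    (F' : EuclideanSpace ℝ (Fin d) → EuclideanSpace ℝ (Fin d))
    (hdiff : ∀ x, HasGradientAt F (F' x) x)
    (hsmooth : ∀ x y, F y ≤ F x + ⟪F' x, y - x⟫ + L / 2 * ‖y - x‖ ^ 2)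
    (Hbar : Matrix (Fin d) (Fin d) ℝ) (hsym : Hbar.IsSymm)
    (hlb : (Hbar - M₁ • (1 : Matrix (Fin d) (Fin d) ℝ)).PosSemidef)
    (hub : (M₂ • (1 : Matrix (Fin d) (Fin d) ℝ) - Hbar).PosSemidef)
    (xk dk xk1 : EuclideanSpace ℝ (Fin d)) (hstep : xk1 = xk - α • dk) :
    F xk1 ≤ F xk - α * M₁ * ‖F' xk‖ ^ 2
      + α * ⟪F' xk, Matrix.toEuclideanCLM (𝕜 := ℝ) Hbar (F' xk) - dk⟫
      + α ^ 2 * L * (‖Matrix.toEuclideanCLM (𝕜 := ℝ) Hbar (F' xk)‖ ^ 2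
        + ‖Matrix.toEuclideanCLM (𝕜 := ℝ) Hbar (F' xk) - dk‖ ^ 2) := by
  set g := F' xk with hg
  set h := Matrix.toEuclideanCLM (𝕜 := ℝ) Hbar g with hh
  set e := h - dk with he
  have hdk : dk = h - e := by simp [he]
  have hdiff1 : xk1 - xk = -(α • dk) := by rw [hstep]; abel
  have hS := hsmooth xk xk1
  rw [hdiff1] at hS
  have hinner1 : ⟪g, -(α • dk)⟫ = -(α * ⟪g, h⟫) + α * ⟪g, e⟫ := by
    rw [hdk]
    rw [inner_neg_right, inner_smul_right, inner_sub_right]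
    ring
  have hnorm1 : ‖-(α • dk)‖ ^ 2 = α ^ 2 * ‖dk‖ ^ 2 := by
    rw [norm_neg, norm_smul]
    simp [mul_pow, abs_of_pos hα]
  have hdknorm : ‖dk‖ ^ 2 ≤ 2 * (‖h‖ ^ 2 + ‖e‖ ^ 2) := by
    rw [hdk]
    have h1 : ‖h - e‖ ≤ ‖h‖ + ‖e‖ := norm_sub_le h e
    have h2 := mul_self_le_mul_self (norm_nonneg (h - e)) h1
    nlinarith [sq_nonneg (‖h‖ - ‖e‖)]
  have hquad : M₁ * ‖g‖ ^ 2 ≤ ⟪g, h⟫ := quad_lower_bound d M₁ Hbar hlb g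
  rw [hinner1, hnorm1] at hS
  have hL2 : L / 2 * (α ^ 2 * ‖dk‖ ^ 2) ≤ α ^ 2 * L * (‖h‖ ^ 2 + ‖e‖ ^ 2) := by
    have h3 := mul_le_mul_of_nonneg_left hdknorm (by positivity : (0:ℝ) ≤ L / 2 * α ^ 2)
    nlinarith
  nlinarith [mul_le_mul_of_nonneg_left hquad hα.le]
end

section
/- Let J ∈ ℝ^{3×3} and H ∈ ℝ^{3×3} be entrywise nonnegative matrices with ρ(J) < 1. If there exists a positive vector q ∈ ℝ³ and θ ∈ (0,1) with (I − J)^{-1}H·q ≤ θq entrywise, and ‖J^T‖ (in the weighted infinity norm induced by q) tends to 0 as T → ∞, then for T large enough the matrix J^T + ∑_{l=0}^{T−1} J^l H has spectral radius strictly less than 1. -/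
/-- Weighted infinity operator norm of a matrix, induced by the weighted
vector norm `‖a‖_∞^q = max_i |a_i| / q_i` for a positive weight vector `q`. -/
noncomputable def wMatNorm (q : Fin 3 → ℝ) (J : Matrix (Fin 3) (Fin 3) ℝ) : ℝ :=
  Finset.univ.sup' Finset.univ_nonempty (fun i => (∑ j, |J i j| * q j) / q i)

lemma mulVec_le_wMatNorm (q : Fin 3 → ℝ) (hq : ∀ i, 0 < q i)
    (A : Matrix (Fin 3) (Fin 3) ℝ) (hA : ∀ i j, 0 ≤ A i j) (i : Fin 3) :
    A.mulVec q i ≤ wMatNorm q A * q i := by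
  have h1 : A.mulVec q i = ∑ j, |A i j| * q j := by
    simp only [Matrix.mulVec, dotProduct]
    exact Finset.sum_congr rfl fun j _ => by rw [abs_of_nonneg (hA i j)]
  have h2 : (∑ j, |A i j| * q j) / q i ≤ wMatNorm q A :=
    Finset.le_sup' (fun i => (∑ j, |A i j| * q j) / q i) (Finset.mem_univ i)
  rw [h1, ← div_mul_cancel₀ (∑ j, |A i j| * q j) (hq i).ne']
  exact mul_le_mul_of_nonneg_right h2 (hq i).le

lemma entry_le_wMatNorm (q : Fin 3 → ℝ) (hq : ∀ i, 0 < q i)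
    (A : Matrix (Fin 3) (Fin 3) ℝ) (hA : ∀ i j, 0 ≤ A i j) (i j : Fin 3) :
    A i j ≤ wMatNorm q A * (q i / q j) := by
  have h1 : A i j * q j ≤ A.mulVec q i := by
    simp only [Matrix.mulVec, dotProduct]
    have : A i j * q j = ∑ k ∈ {j}, A i k * q k := by simp
    rw [this]
    exact Finset.sum_le_sum_of_subset_of_nonneg (Finset.subset_univ _)
      (fun k _ _ => mul_nonneg (hA i k) (hq k).le)
  have h2 := h1.trans (mulVec_le_wMatNorm q hq A hA i)
  rw [mul_div_assoc'] at *
  exact (le_div_iff₀ (hq j)).mpr h2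

lemma spec_bound (M : Matrix (Fin 3) (Fin 3) ℝ) (hM : ∀ i j, 0 ≤ M i j)
    (q : Fin 3 → ℝ) (hq : ∀ i, 0 < q i) (c : ℝ)
    (hc : ∀ i, M.mulVec q i ≤ c * q i)
    (μ : ℂ) (hμ : μ ∈ spectrum ℂ (M.map ((↑) : ℝ → ℂ))) : ‖μ‖ ≤ c := by
  rw [spectrum.mem_iff] at hμ
  set A := algebraMap ℂ (Matrix (Fin 3) (Fin 3) ℂ) μ - M.map ((↑) : ℝ → ℂ) with hA
  have hdet : A.det = 0 := by
    by_contra h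
    exact hμ ((Matrix.isUnit_iff_isUnit_det A).mpr (isUnit_iff_ne_zero.mpr h))
  obtain ⟨v, hv0, hv⟩ := Matrix.exists_mulVec_eq_zero_iff.mpr hdet
  have heig : (M.map ((↑) : ℝ → ℂ)).mulVec v = μ • v := by
    have : A.mulVec v = μ • v - (M.map ((↑) : ℝ → ℂ)).mulVec v := by
      rw [hA, Matrix.sub_mulVec, Algebra.algebraMap_eq_smul_one, Matrix.smul_mulVec,
        Matrix.one_mulVec]
    rw [this] at hv
    linear_combination (norm := module) -hv
  obtain ⟨i, -, hi⟩ := Finset.exists_max_image Finset.univ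
    (fun i => ‖v i‖ / q i) Finset.univ_nonempty
  have hvi : 0 < ‖v i‖ := by
    obtain ⟨j, hj⟩ := Function.ne_iff.mp hv0
    have h1 : 0 < ‖v j‖ / q j :=
      div_pos (by simpa using hj) (hq j)
    have h2 : 0 < ‖v i‖ / q i := lt_of_lt_of_le h1 (hi j (Finset.mem_univ j))
    have := mul_pos h2 (hq i)
    rwa [div_mul_cancel₀ _ (hq i).ne'] at this
  have hbound : ∀ j, ‖v j‖ ≤ (‖v i‖ / q i) * q j := by
    intro j
    have := hi j (Finset.mem_univ j)
    calc ‖v j‖ = ‖v j‖ / q j * q j :=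
          (div_mul_cancel₀ _ (hq j).ne').symm
      _ ≤ (‖v i‖ / q i) * q j :=
          mul_le_mul_of_nonneg_right this (hq j).le
  have heigi : μ * v i = ∑ j, (M i j : ℂ) * v j := by
    have := congrFun heig i
    simp only [Matrix.mulVec, dotProduct, Matrix.map_apply, Pi.smul_apply,
      smul_eq_mul] at this
    exact this.symm
  have key : ‖μ‖ * ‖v i‖ ≤ c * ‖v i‖ := by
    calc ‖μ‖ * ‖v i‖ = ‖μ * v i‖ := (norm_mul _ _).symm
      _ = ‖∑ j, (M i j : ℂ) * v j‖ := by rw [heigi]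
      _ ≤ ∑ j, ‖(M i j : ℂ) * v j‖ := norm_sum_le _ _
      _ = ∑ j, M i j * ‖v j‖ := by
          refine Finset.sum_congr rfl fun j _ => ?_
          rw [norm_mul, Complex.norm_real, Real.norm_of_nonneg (hM i j)]
      _ ≤ ∑ j, M i j * ((‖v i‖ / q i) * q j) := by
          refine Finset.sum_le_sum fun j _ => mul_le_mul_of_nonneg_left (hbound j) (hM i j)
      _ = (‖v i‖ / q i) * M.mulVec q i := by
          simp only [Matrix.mulVec, dotProduct, Finset.mul_sum]
          exact Finset.sum_congr rfl fun j _ => by ring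
      _ ≤ (‖v i‖ / q i) * (c * q i) :=
          mul_le_mul_of_nonneg_left (hc i) (div_nonneg (norm_nonneg _) (hq i).le)
      _ = c * ‖v i‖ := by
          rw [mul_comm c (q i), ← mul_assoc, div_mul_cancel₀ _ (hq i).ne', mul_comm]
  exact le_of_mul_le_mul_right key hvi

theorem eventually_spectral_radius_lt_one
    (J H : Matrix (Fin 3) (Fin 3) ℝ)
    (hJ : ∀ i j, 0 ≤ J i j) (hH : ∀ i j, 0 ≤ H i j)
    (hρJ : ∀ μ ∈ spectrum ℂ (J.map ((↑) : ℝ → ℂ)), ‖μ‖ < 1)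
    (q : Fin 3 → ℝ) (hq : ∀ i, 0 < q i)
    (θ : ℝ) (hθ0 : 0 < θ) (hθ1 : θ < 1)
    (hsub : ∀ i, ((1 - J)⁻¹ * H).mulVec q i ≤ θ * q i)
    (hdecay : Filter.Tendsto (fun T => wMatNorm q (J ^ T)) Filter.atTop (nhds 0)) :
    ∃ T₀ : ℕ, ∀ T ≥ T₀,
      ∀ μ ∈ spectrum ℂ
          ((J ^ T + ∑ l ∈ Finset.range T, J ^ l * H).map ((↑) : ℝ → ℂ)),
        ‖μ‖ < 1 := by
  -- entries of powers of J are nonnegative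
  have hJpow : ∀ T i j, 0 ≤ (J ^ T) i j := by
    intro T
    induction T with
    | zero => intro i j; rcases eq_or_ne i j with h | h <;>
        simp [Matrix.one_apply, h, le_refl, zero_le_one]
    | succ n ih =>
      intro i j
      rw [pow_succ, Matrix.mul_apply]
      exact Finset.sum_nonneg fun k _ => mul_nonneg (ih i k) (hJ k j)
  -- invertibility of 1 - J
  have hone : (1 : ℂ) ∉ spectrum ℂ (J.map ((↑) : ℝ → ℂ)) := by
    intro h
    simpa using hρJ 1 h
  have hunitC : IsUnit ((1 : Matrix (Fin 3) (Fin 3) ℂ) - J.map ((↑) : ℝ → ℂ)) := by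
    rw [spectrum.mem_iff, not_not] at hone
    simpa using hone
  have hdetC : ((1 : Matrix (Fin 3) (Fin 3) ℂ) - J.map ((↑) : ℝ → ℂ)).det ≠ 0 :=
    (Matrix.isUnit_iff_isUnit_det _).mp hunitC |>.ne_zero
  have hdetR : IsUnit ((1 - J).det) := by
    rw [isUnit_iff_ne_zero]
    intro h
    apply hdetC
    have hmap : ((1 - J).map ((↑) : ℝ → ℂ)) =
        (1 : Matrix (Fin 3) (Fin 3) ℂ) - J.map ((↑) : ℝ → ℂ) := by
      ext i j
      simp [Matrix.map_apply, Matrix.sub_apply, Matrix.one_apply, apply_ite]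
    rw [← hmap]
    have hd := RingHom.map_det Complex.ofRealHom (1 - J)
    have : (1 - J).map ((↑) : ℝ → ℂ) = Complex.ofRealHom.mapMatrix (1 - J) := rfl
    rw [this, ← hd, h]
    simp
  have hinv : (1 - J)⁻¹ * (1 - J) = 1 := Matrix.nonsing_inv_mul _ hdetR
  set B := (1 - J)⁻¹ with hB
  set S : ℕ → Matrix (Fin 3) (Fin 3) ℝ := fun T => ∑ l ∈ Finset.range T, J ^ l with hSdef
  have hS : ∀ T, S T = B - B * J ^ T := by
    intro T
    have hg : (1 - J) * S T = 1 - J ^ T := mul_neg_geom_sum J T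
    have := congrArg (fun X => B * X) hg
    simpa [← Matrix.mul_assoc, hinv, Matrix.mul_sub, Matrix.mul_one] using this
  -- entries of J^T tend to zero
  have hent : ∀ k j, Filter.Tendsto (fun T => (J ^ T) k j) Filter.atTop (nhds 0) := by
    intro k j
    apply squeeze_zero (fun T => hJpow T k j)
      (fun T => entry_le_wMatNorm q hq (J ^ T) (hJpow T) k j)
    simpa using hdecay.mul_const (q k / q j)
  -- entries of B are nonnegative
  have hBnn : ∀ i j, 0 ≤ B i j := by
    intro i j
    have h1 : Filter.Tendsto (fun T => (S T) i j) Filter.atTop (nhds (B i j)) := by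
      have h2 : Filter.Tendsto (fun T => (B * J ^ T) i j) Filter.atTop (nhds 0) := by
        have : ∀ T, (B * J ^ T) i j = ∑ k, B i k * (J ^ T) k j := fun T => Matrix.mul_apply
        simp only [this]
        have h3 : Filter.Tendsto (fun T => ∑ k, B i k * (J ^ T) k j) Filter.atTop
            (nhds (∑ k : Fin 3, (0:ℝ))) := by
          apply tendsto_finset_sum
          intro k _
          simpa using (hent k j).const_mul (B i k)
        simpa using h3
      have : ∀ T, (S T) i j = B i j - (B * J ^ T) i j := by
        intro T
        rw [hS T]
        simp [Matrix.sub_apply]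
      simp only [this]
      simpa using (tendsto_const_nhds (x := B i j)).sub h2
    refine le_of_tendsto_of_tendsto' tendsto_const_nhds h1 fun T => ?_
    simp only [hSdef, Matrix.sum_apply]
    exact Finset.sum_nonneg fun l _ => hJpow l i j
  -- S T ≤ B entrywise
  have hSle : ∀ T i j, (S T) i j ≤ B i j := by
    intro T i j
    rw [hS T]
    have h0 : 0 ≤ (B * J ^ T) i j := by
      rw [Matrix.mul_apply]
      exact Finset.sum_nonneg fun k _ => mul_nonneg (hBnn i k) (hJpow T k j)
    simp only [Matrix.sub_apply]
    linarith
  -- choose T₀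
  rw [Metric.tendsto_atTop] at hdecay
  obtain ⟨T₀, hT₀⟩ := hdecay (1 - θ) (by linarith)
  refine ⟨T₀, fun T hT μ hμ => ?_⟩
  have hw : wMatNorm q (J ^ T) < 1 - θ := by
    have := hT₀ T hT
    rw [Real.dist_eq, sub_zero] at this
    exact (le_abs_self _).trans_lt this
  set M := J ^ T + ∑ l ∈ Finset.range T, J ^ l * H with hM
  have hsumH : (∑ l ∈ Finset.range T, J ^ l * H) = S T * H := (Finset.sum_mul _ _ _).symm
  have hMnn : ∀ i j, 0 ≤ M i j := by
    intro i j
    rw [hM, Matrix.add_apply, hsumH]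
    have h1 : 0 ≤ (S T * H) i j := by
      rw [Matrix.mul_apply]
      refine Finset.sum_nonneg fun k _ => mul_nonneg ?_ (hH k j)
      simp only [hSdef, Matrix.sum_apply]
      exact Finset.sum_nonneg fun l _ => hJpow l i k
    exact add_nonneg (hJpow T i j) h1
  have hcbound : ∀ i, M.mulVec q i ≤ (wMatNorm q (J ^ T) + θ) * q i := by
    intro i
    rw [hM, Matrix.add_mulVec, hsumH]
    have h1 : (J ^ T).mulVec q i ≤ wMatNorm q (J ^ T) * q i :=
      mulVec_le_wMatNorm q hq (J ^ T) (hJpow T) i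
    have h2 : (S T * H).mulVec q i ≤ θ * q i := by
      have h3 : (S T * H).mulVec q i ≤ (B * H).mulVec q i := by
        simp only [Matrix.mulVec, dotProduct]
        refine Finset.sum_le_sum fun k _ => mul_le_mul_of_nonneg_right ?_ (hq k).le
        rw [Matrix.mul_apply, Matrix.mul_apply]
        exact Finset.sum_le_sum fun l _ =>
          mul_le_mul_of_nonneg_right (hSle T i l) (hH l k)
      exact h3.trans (hsub i)
    calc (J ^ T).mulVec q i + (S T * H).mulVec q i
        ≤ wMatNorm q (J ^ T) * q i + θ * q i := add_le_add h1 h2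
      _ = (wMatNorm q (J ^ T) + θ) * q i := (add_mul _ _ _).symm
  have := spec_bound M hMnn q hq (wMatNorm q (J ^ T) + θ) hcbound μ hμ
  linarith
end
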